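/- Let b = (b₁,b₂,b₃,b₄) ∈ ℚ(ω)⁴ with |b| < 1 (where ω = e^{2πi/3}), and let Λ ⊂ ℂ⁵ be the ℤ-lattice spanned by the 10 columns of the 5×10 period matrix P(b) = (A, B), with A, B as in the period-matrix formula: A has first row (1,b), first column (1,b)ᵀ, identity in the lower 4×4 block; B has first row (ω, ω̄b), first column (ω, ω̄b)ᵀ, ωI in the lower block. Then Λ ⊗ ℚ (the ℚ-span of the columns) equals ℚ(ω)·(ℚ-span of columns of A), and there is a ℂ-linear automorphism of ℂ⁵ carrying Λ ⊗ ℚ onto ℚ(ω)⁵; i.e., the corresponding complex torus ℂ⁵/Λ is isogenous to the product of five Fermat elliptic curves. -/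

import Mathlib

open Complex Finset Matrix

lemma aux_span_eq (ω : ℂ) (S : Set (Option (Fin 4) → ℂ))
    (hsub : ∀ v ∈ S, ∀ j, ∃ p q : ℚ, v j = (p : ℂ) + (q : ℂ) * ω)
    (hsingle : ∀ j, (Pi.single j (1:ℂ) : Option (Fin 4) → ℂ) ∈ Submodule.span ℚ S)
    (hωsingle : ∀ j, ω • (Pi.single j (1:ℂ) : Option (Fin 4) → ℂ) ∈ Submodule.span ℚ S) :
    ((Submodule.span ℚ S : Submodule ℚ (Option (Fin 4) → ℂ)) : Set (Option (Fin 4) → ℂ))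
      = {v : Option (Fin 4) → ℂ | ∀ j, ∃ p q : ℚ, v j = (p : ℂ) + (q : ℂ) * ω} := by
  apply Set.Subset.antisymm
  · intro x hx
    simp only [SetLike.mem_coe] at hx
    induction hx using Submodule.span_induction with
    | mem v hv => exact hsub v hv
    | zero => exact fun j => ⟨0, 0, by simp⟩
    | add x y _ _ hx hy =>
      intro j
      obtain ⟨px, qx, hx⟩ := hx j
      obtain ⟨py, qy, hy⟩ := hy j
      refine ⟨px + py, qx + qy, ?_⟩
      simp only [Pi.add_apply, hx, hy]
      push_cast; ring
    | smul c x _ hx =>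
      intro j
      obtain ⟨px, qx, hx⟩ := hx j
      refine ⟨c * px, c * qx, ?_⟩
      simp only [Pi.smul_apply, Rat.smul_def, hx]
      push_cast; ring
  · intro v hv
    simp only [Set.mem_setOf_eq] at hv
    choose pv qv hv using hv
    have hveq : v = ∑ j : Option (Fin 4),
        (pv j • (Pi.single j (1:ℂ) : Option (Fin 4) → ℂ)
          + qv j • (ω • (Pi.single j (1:ℂ) : Option (Fin 4) → ℂ))) := by
      funext i
      have hterm : ∀ j : Option (Fin 4),
          (pv j • (Pi.single j (1:ℂ) : Option (Fin 4) → ℂ)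
            + qv j • (ω • (Pi.single j (1:ℂ) : Option (Fin 4) → ℂ))) i
          = if i = j then (pv j : ℂ) + qv j * ω else 0 := by
        intro j
        simp only [Pi.add_apply, Pi.smul_apply, Pi.single_apply, Rat.smul_def,
          smul_eq_mul, mul_ite, mul_one, mul_zero]
        split <;> simp
      rw [Finset.sum_apply, Finset.sum_congr rfl (fun j _ => hterm j), Finset.sum_ite_eq]
      simp [hv i]
    rw [hveq]
    exact Submodule.sum_mem _ fun j _ => add_mem
      (Submodule.smul_mem _ _ (hsingle j)) (Submodule.smul_mem _ _ (hωsingle j))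

/-- For `b ∈ ℚ(ω)⁴` with `|b| < 1`, the ℚ-span of the 10 columns of the
period matrix `P(b) = (A, B)` is the `ℚ(ω)`-span of the columns of `A`, and
some ℂ-linear automorphism of `ℂ⁵` carries it onto `ℚ(ω)⁵`: the complex torus
`ℂ⁵/Λ` is isogenous to the product of five Fermat elliptic curves. -/
theorem lattice_isogenous_to_fermat
    (ω : ℂ) (hω : ω = Complex.exp (2 * Real.pi * Complex.I / 3))
    (b : Fin 4 → ℂ)
    (hbQ : ∀ i, ∃ p q : ℚ, b i = (p : ℂ) + (q : ℂ) * ω)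
    (hb : ∑ i, ‖b i‖ ^ 2 < 1)
    (A B : Matrix (Option (Fin 4)) (Option (Fin 4)) ℂ)
    (hA : ∀ i j, A i j = match i, j with
      | none, none => 1
      | none, some j => b j
      | some i, none => b i
      | some i, some j => if i = j then 1 else 0)
    (hB : ∀ i j, B i j = match i, j with
      | none, none => ω
      | none, some j => starRingEnd ℂ ω * b j
      | some i, none => starRingEnd ℂ ω * b i
      | some i, some j => if i = j then ω else 0)
    (colsA cols : Set (Option (Fin 4) → ℂ))
    (hcolsA : colsA = Set.range (fun j => fun i => A i j))
    (hcols : cols = Set.range (fun j => fun i => A i j) ∪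
      Set.range (fun j => fun i => B i j)) :
    (Submodule.span ℚ cols : Submodule ℚ (Option (Fin 4) → ℂ)) =
      Submodule.span ℚ (colsA ∪ (fun v => ω • v) '' colsA) ∧
    ∃ T : (Option (Fin 4) → ℂ) ≃ₗ[ℂ] (Option (Fin 4) → ℂ),
      (T : (Option (Fin 4) → ℂ) → (Option (Fin 4) → ℂ)) ''
          ((Submodule.span ℚ cols : Submodule ℚ (Option (Fin 4) → ℂ)) : Set (Option (Fin 4) → ℂ))
        = {v : Option (Fin 4) → ℂ | ∀ j, ∃ p q : ℚ, v j = (p : ℂ) + (q : ℂ) * ω} := by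
  -- basic facts about ω
  have hωe : ω = Complex.exp ((2*Real.pi/3 : ℝ) * Complex.I) := by
    rw [hω]; push_cast; ring_nf
  have h23 : 2*Real.pi/3 = Real.pi - Real.pi/3 := by ring
  have hre : ω.re = -(1/2) := by
    rw [hωe, Complex.exp_ofReal_mul_I_re, h23, Real.cos_pi_sub, Real.cos_pi_div_three]
  have him : ω.im = Real.sqrt 3 / 2 := by
    rw [hωe, Complex.exp_ofReal_mul_I_im, h23, Real.sin_pi_sub, Real.sin_pi_div_three]
  have him2 : ω.im ^ 2 = 3/4 := by
    rw [him]; rw [div_pow, Real.sq_sqrt (by norm_num : (3:ℝ) ≥ 0)]; norm_num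
  have hω3 : ω^2 + ω + 1 = 0 := by
    apply Complex.ext <;>
      simp [pow_two, Complex.mul_re, Complex.mul_im, Complex.add_re, Complex.add_im, hre] <;>
      nlinarith [him2]
  have hconj : starRingEnd ℂ ω = -1 - ω := by
    apply Complex.ext <;> simp [hre] <;> norm_num
  have habsq : ∀ x y : ℚ, ‖(x:ℂ) + (y:ℂ)*ω‖^2 = (x:ℝ)^2 - x*y + y^2 := by
    intro x y
    rw [Complex.sq_norm, Complex.normSq_apply]
    simp [Complex.add_re, Complex.add_im, Complex.mul_re, Complex.mul_im, hre]
    nlinarith [him2]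
  choose p q hbpq using hbQ
  -- the rational number α = 1 - ∑ |b j|²  (positive)
  have habsb : ∀ j, ‖b j‖^2 = ((p j^2 - p j*q j + q j^2 : ℚ) : ℝ) := by
    intro j; rw [hbpq j, habsq]; push_cast; ring
  have hα : 0 < 1 - ∑ j, (p j^2 - p j*q j + q j^2) := by
    have h1 : ((∑ j, (p j^2 - p j*q j + q j^2) : ℚ) : ℝ) < 1 := by
      push_cast
      calc (∑ j, ((p j:ℝ)^2 - p j*q j + q j^2)) = ∑ j, ‖b j‖^2 := by
            refine Finset.sum_congr rfl fun j _ => ?_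
            rw [habsb j]; push_cast; ring
        _ < 1 := hb
    have := (Rat.cast_lt (K := ℝ)).mp (by exact_mod_cast h1)
    linarith
  have hα0 : (1 - ∑ j, (p j^2 - p j*q j + q j^2)) ≠ 0 := ne_of_gt hα
  -- the complex number s = ∑ b j ², with 1 - s ≠ 0, and its ℚ(ω)-inverse data
  have hsabs : ‖∑ j, b j^2‖ < 1 := by
    calc ‖∑ j, b j^2‖ ≤ ∑ j, ‖b j^2‖ := norm_sum_le _ _
      _ = ∑ j, ‖b j‖^2 := by simp [norm_pow]
      _ < 1 := hb
  have hs1 : (1:ℂ) - ∑ j, b j^2 ≠ 0 := by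
    intro h
    have : (∑ j, b j^2) = 1 := by linear_combination -h
    rw [this] at hsabs; simp at hsabs
  have hbsq : ∀ j, b j^2 = ((p j^2 - q j^2 : ℚ):ℂ) + ((2*p j*q j - q j^2 : ℚ):ℂ) * ω := by
    intro j; rw [hbpq j]; push_cast; linear_combination (q j:ℂ)^2 * hω3
  have huv : ((1 - ∑ j, (p j^2 - q j^2) : ℚ):ℂ) + ((- ∑ j, (2*p j*q j - q j^2) : ℚ):ℂ) * ω
      = 1 - ∑ j, b j^2 := by
    rw [Finset.sum_congr rfl (fun j _ => hbsq j)]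
    push_cast
    rw [Finset.sum_add_distrib, ← Finset.sum_mul]
    ring
  set uq : ℚ := 1 - ∑ j, (p j^2 - q j^2) with huq
  set vq : ℚ := - ∑ j, (2*p j*q j - q j^2) with hvq
  set n : ℚ := uq^2 - uq*vq + vq^2 with hn
  have hn0 : n ≠ 0 := by
    have h1 : ((n:ℚ):ℝ) = ‖(uq:ℂ) + (vq:ℂ)*ω‖^2 := by
      rw [habsq]; push_cast [hn]; ring
    have h2 : (0:ℝ) < ((n:ℚ):ℝ) := by
      rw [h1, huv]
      exact pow_pos (norm_pos_iff.mpr hs1) 2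
    intro h; rw [h] at h2; simp at h2
  have hrt : (((uq - vq)/n : ℚ):ℂ) + ((-vq/n : ℚ):ℂ) * ω ≠ 0 ∨ True := Or.inr trivial
  have hnC : ((n:ℚ):ℂ) ≠ 0 := by exact_mod_cast hn0
  have hinvX : ((((uq - vq)/n : ℚ):ℂ) + ((-vq/n : ℚ):ℂ) * ω) * ((1:ℂ) - ∑ j, b j^2) = 1 := by
    rw [← huv]
    push_cast
    field_simp
    push_cast [hn]
    linear_combination (-(vq:ℂ)^2) * hω3
  -- membership of columns
  have hcA : ∀ j, (fun i => A i j) ∈ cols := fun j => by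
    rw [hcols]; exact Set.mem_union_left _ ⟨j, rfl⟩
  have hcB : ∀ j, (fun i => B i j) ∈ cols := fun j => by
    rw [hcols]; exact Set.mem_union_right _ ⟨j, rfl⟩
  have hNA : ∀ j, (fun i => A i j) ∈ Submodule.span ℚ cols :=
    fun j => Submodule.subset_span (hcA j)
  have hNB : ∀ j, (fun i => B i j) ∈ Submodule.span ℚ cols :=
    fun j => Submodule.subset_span (hcB j)
  -- e₀ ∈ span ℚ cols
  have hterm1 : ∀ j : Fin 4, (p j:ℂ) * b j + (q j:ℂ) * (starRingEnd ℂ ω * b j)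
      = ((p j^2 - p j*q j + q j^2 : ℚ) : ℂ) := by
    intro j; rw [hbpq j, hconj]; push_cast; linear_combination (-(q j:ℂ)^2) * hω3
  have hXeq : ((fun i => A i none) - ∑ j, (p j • (fun i => A i (some j))
        + q j • (fun i => B i (some j))) : Option (Fin 4) → ℂ)
      = (1 - ∑ j, (p j^2 - p j*q j + q j^2) : ℚ) • (Pi.single none 1 : Option (Fin 4) → ℂ) := by
    funext i
    have hterm : ∀ j : Fin 4, ((p j • (fun i => A i (some j))
        + q j • (fun i => B i (some j)) : Option (Fin 4) → ℂ)) i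
        = (p j:ℂ) * A i (some j) + (q j:ℂ) * B i (some j) := by
      intro j; simp [Rat.smul_def]
    rw [Pi.sub_apply, Finset.sum_apply, Finset.sum_congr rfl (fun j _ => hterm j)]
    match i with
    | none =>
      have h1 : ∀ j : Fin 4, (p j:ℂ) * A none (some j) + (q j:ℂ) * B none (some j)
          = ((p j^2 - p j*q j + q j^2 : ℚ) : ℂ) := by
        intro j
        simp only [hA, hB]
        rw [hconj, hbpq j]
        push_cast
        linear_combination (-(q j:ℂ)^2) * hω3
      rw [Finset.sum_congr rfl (fun j _ => h1 j)]
      simp only [hA, Pi.smul_apply, Pi.single_apply, Rat.smul_def, if_pos rfl,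
        smul_eq_mul, mul_one]
      push_cast; ring
    | some k =>
      simp only [hA, hB, Pi.smul_apply, Pi.single_apply, Rat.smul_def, smul_eq_mul]
      rw [Finset.sum_congr rfl (fun j _ => show (p j:ℂ) * (if k = j then 1 else 0)
          + (q j:ℂ) * (if k = j then ω else 0) = if k = j then (p j:ℂ) + q j * ω else 0
        from by split <;> simp)]
      rw [Finset.sum_ite_eq]
      simp [hbpq k]
  have hXmem : (1 - ∑ j, (p j^2 - p j*q j + q j^2) : ℚ) • (Pi.single none 1 : Option (Fin 4) → ℂ)
      ∈ Submodule.span ℚ cols := by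
    rw [← hXeq]
    exact sub_mem (hNA none) (Submodule.sum_mem _ fun j _ => add_mem
      (Submodule.smul_mem _ _ (hNA (some j))) (Submodule.smul_mem _ _ (hNB (some j))))
  have hE0 : (Pi.single none 1 : Option (Fin 4) → ℂ) ∈ Submodule.span ℚ cols := by
    have := Submodule.smul_mem _ ((1 - ∑ j, (p j^2 - p j*q j + q j^2) : ℚ))⁻¹ hXmem
    rwa [smul_smul, inv_mul_cancel₀ hα0, one_smul] at this
  -- ω•e₀ ∈ span ℚ cols
  have hYeq : ((fun i => B i none) - ∑ j, ((q j - p j) • (fun i => A i (some j))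
        + (-(p j)) • (fun i => B i (some j))) : Option (Fin 4) → ℂ)
      = (1 - ∑ j, (p j^2 - p j*q j + q j^2) : ℚ)
        • (ω • (Pi.single none 1 : Option (Fin 4) → ℂ)) := by
    funext i
    have hterm : ∀ j : Fin 4, (((q j - p j) • (fun i => A i (some j))
        + (-(p j)) • (fun i => B i (some j)) : Option (Fin 4) → ℂ)) i
        = ((q j - p j : ℚ):ℂ) * A i (some j) + ((-(p j) : ℚ):ℂ) * B i (some j) := by
      intro j; simp [Rat.smul_def]
    rw [Pi.sub_apply, Finset.sum_apply, Finset.sum_congr rfl (fun j _ => hterm j)]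
    match i with
    | none =>
      have h1 : ∀ j : Fin 4, ((q j - p j : ℚ):ℂ) * A none (some j)
          + ((-(p j) : ℚ):ℂ) * B none (some j)
          = ((p j^2 - p j*q j + q j^2 : ℚ) : ℂ) * ω := by
        intro j
        simp only [hA, hB]
        rw [hconj, hbpq j]
        push_cast
        linear_combination ((p j:ℂ)*(q j)) * hω3
      rw [Finset.sum_congr rfl (fun j _ => h1 j), ← Finset.sum_mul]
      simp only [hB, Pi.smul_apply, Pi.single_apply, Rat.smul_def, if_pos rfl,
        smul_eq_mul, mul_one]
      push_cast; ring
    | some k =>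
      simp only [hA, hB, Pi.smul_apply, Pi.single_apply, Rat.smul_def, smul_eq_mul]
      rw [Finset.sum_congr rfl (fun j _ => show ((q j - p j : ℚ):ℂ) * (if k = j then 1 else 0)
          + ((-(p j) : ℚ):ℂ) * (if k = j then ω else 0)
          = if k = j then ((q j - p j : ℚ):ℂ) + ((-(p j) : ℚ):ℂ) * ω else 0
        from by split <;> simp)]
      rw [Finset.sum_ite_eq]
      simp only [Finset.mem_univ, if_true, if_neg (Option.some_ne_none k)]
      rw [hconj, hbpq k]
      push_cast
      linear_combination (-(q k:ℂ)) * hω3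
  have hYmem : (1 - ∑ j, (p j^2 - p j*q j + q j^2) : ℚ)
      • (ω • (Pi.single none 1 : Option (Fin 4) → ℂ)) ∈ Submodule.span ℚ cols := by
    rw [← hYeq]
    exact sub_mem (hNB none) (Submodule.sum_mem _ fun j _ => add_mem
      (Submodule.smul_mem _ _ (hNA (some j))) (Submodule.smul_mem _ _ (hNB (some j))))
  have hωE0 : ω • (Pi.single none 1 : Option (Fin 4) → ℂ) ∈ Submodule.span ℚ cols := by
    have := Submodule.smul_mem _ ((1 - ∑ j, (p j^2 - p j*q j + q j^2) : ℚ))⁻¹ hYmem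
    rwa [smul_smul, inv_mul_cancel₀ hα0, one_smul] at this
  -- eₖ and ω•eₖ in span ℚ cols
  have hEkeq : ∀ k : Fin 4, (Pi.single (some k) 1 : Option (Fin 4) → ℂ)
      = (fun i => A i (some k)) - p k • (Pi.single none 1 : Option (Fin 4) → ℂ)
        - q k • (ω • (Pi.single none 1 : Option (Fin 4) → ℂ)) := by
    intro k
    funext i
    match i with
    | none =>
      simp only [Pi.sub_apply, Pi.smul_apply, Pi.single_apply, Rat.smul_def, smul_eq_mul, hA,
        if_pos rfl, reduceCtorEq, if_false, if_neg (Option.some_ne_none k).symm]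
      rw [hbpq k]; push_cast; ring
    | some i =>
      simp only [Pi.sub_apply, Pi.smul_apply, Pi.single_apply, Rat.smul_def, smul_eq_mul, hA,
        reduceCtorEq, if_false, Option.some.injEq, mul_zero]
      ring_nf
  have hEk : ∀ k : Fin 4, (Pi.single (some k) 1 : Option (Fin 4) → ℂ)
      ∈ Submodule.span ℚ cols := by
    intro k
    rw [hEkeq k]
    exact sub_mem (sub_mem (hNA (some k)) (Submodule.smul_mem _ _ hE0))
      (Submodule.smul_mem _ _ hωE0)
  have hωEkeq : ∀ k : Fin 4, ω • (Pi.single (some k) 1 : Option (Fin 4) → ℂ)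
      = (fun i => B i (some k)) + (p k - q k) • (Pi.single none 1 : Option (Fin 4) → ℂ)
        + p k • (ω • (Pi.single none 1 : Option (Fin 4) → ℂ)) := by
    intro k
    funext i
    match i with
    | none =>
      simp only [Pi.add_apply, Pi.smul_apply, Pi.single_apply, Rat.smul_def, smul_eq_mul, hB,
        if_pos rfl, reduceCtorEq, if_false, if_neg (Option.some_ne_none k).symm, mul_zero,
        mul_one]
      rw [hconj, hbpq k]
      push_cast
      linear_combination (q k:ℂ) * hω3
    | some i =>
      simp only [Pi.add_apply, Pi.smul_apply, Pi.single_apply, Rat.smul_def, smul_eq_mul, hB,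
        reduceCtorEq, if_false, Option.some.injEq, mul_zero]
      split <;> simp
  have hωEk : ∀ k : Fin 4, ω • (Pi.single (some k) 1 : Option (Fin 4) → ℂ)
      ∈ Submodule.span ℚ cols := by
    intro k
    rw [hωEkeq k]
    exact add_mem (add_mem (hNB (some k)) (Submodule.smul_mem _ _ hE0))
      (Submodule.smul_mem _ _ hωE0)
  -- the other generating set
  set SA : Set (Option (Fin 4) → ℂ) := colsA ∪ (fun v => ω • v) '' colsA with hSA
  have hcA' : ∀ j, (fun i => A i j) ∈ SA := fun j =>
    Set.mem_union_left _ (by rw [hcolsA]; exact ⟨j, rfl⟩)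
  have hcωA' : ∀ j, ω • (fun i => A i j) ∈ SA := fun j =>
    Set.mem_union_right _ ⟨_, by rw [hcolsA]; exact ⟨j, rfl⟩, rfl⟩
  have hMA : ∀ j, (fun i => A i j) ∈ Submodule.span ℚ SA :=
    fun j => Submodule.subset_span (hcA' j)
  have hωω : ω * ω = -1 - ω := by linear_combination hω3
  -- span ℚ SA is stable under multiplication by ω
  have hstab : ∀ x ∈ Submodule.span ℚ SA, ω • x ∈ Submodule.span ℚ SA := by
    intro x hx
    induction hx using Submodule.span_induction with
    | mem v hv =>
      rcases hv with hv | ⟨y, hy, rfl⟩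
      · exact Submodule.subset_span (Set.mem_union_right _ ⟨v, hv, rfl⟩)
      · rw [smul_smul, hωω, sub_smul, neg_one_smul]
        exact sub_mem (neg_mem (Submodule.subset_span (Set.mem_union_left _ hy)))
          (Submodule.subset_span (Set.mem_union_right _ ⟨y, hy, rfl⟩))
    | zero => rw [smul_zero]; exact zero_mem _
    | add x y _ _ hx hy => rw [smul_add]; exact add_mem hx hy
    | smul c x _ hx => rw [smul_comm]; exact Submodule.smul_mem _ _ hx
  -- (1 - s) • e₀ ∈ span ℚ SA
  have hX'eq : ((fun i => A i none) - ∑ j, (p j • (fun i => A i (some j))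
        + q j • (ω • (fun i => A i (some j)))) : Option (Fin 4) → ℂ)
      = (1 - ∑ j, b j^2) • (Pi.single none 1 : Option (Fin 4) → ℂ) := by
    funext i
    have hterm : ∀ j : Fin 4, ((p j • (fun i => A i (some j))
        + q j • (ω • (fun i => A i (some j))) : Option (Fin 4) → ℂ)) i
        = (p j:ℂ) * A i (some j) + (q j:ℂ) * (ω * A i (some j)) := by
      intro j; simp [Rat.smul_def]
    rw [Pi.sub_apply, Finset.sum_apply, Finset.sum_congr rfl (fun j _ => hterm j)]
    match i with
    | none =>
      have h1 : ∀ j : Fin 4, (p j:ℂ) * A none (some j) + (q j:ℂ) * (ω * A none (some j))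
          = b j^2 := by
        intro j; simp only [hA]; rw [hbpq j]; ring
      rw [Finset.sum_congr rfl (fun j _ => h1 j)]
      simp only [hA, Pi.smul_apply, Pi.single_apply, if_pos rfl, smul_eq_mul, mul_one]
      simp
    | some k =>
      simp only [hA, Pi.smul_apply, Pi.single_apply, smul_eq_mul]
      rw [Finset.sum_congr rfl (fun j _ => show (p j:ℂ) * (if k = j then 1 else 0)
          + (q j:ℂ) * (ω * (if k = j then 1 else 0))
          = if k = j then (p j:ℂ) + (q j:ℂ) * ω else 0
        from by split <;> simp)]
      rw [Finset.sum_ite_eq]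
      simp only [Finset.mem_univ, if_true, if_neg (Option.some_ne_none k), mul_zero]
      rw [hbpq k]; ring
  have hX'mem : (1 - ∑ j, b j^2) • (Pi.single none 1 : Option (Fin 4) → ℂ)
      ∈ Submodule.span ℚ SA := by
    rw [← hX'eq]
    exact sub_mem (hMA none) (Submodule.sum_mem _ fun j _ => add_mem
      (Submodule.smul_mem _ _ (hMA (some j)))
      (Submodule.smul_mem _ _ (Submodule.subset_span (hcωA' (some j)))))
  have hkey : (Pi.single none 1 : Option (Fin 4) → ℂ)
      = ((uq - vq)/n : ℚ) • ((1 - ∑ j, b j^2) • (Pi.single none 1 : Option (Fin 4) → ℂ))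
        + (-vq/n : ℚ) • (ω • ((1 - ∑ j, b j^2) • (Pi.single none 1 : Option (Fin 4) → ℂ))) := by
    funext i
    simp only [Pi.add_apply, Pi.smul_apply, Rat.smul_def, smul_eq_mul]
    linear_combination (-(Pi.single none (1:ℂ) : Option (Fin 4) → ℂ) i) * hinvX
  have hE0' : (Pi.single none 1 : Option (Fin 4) → ℂ) ∈ Submodule.span ℚ SA := by
    rw [hkey]
    exact add_mem (Submodule.smul_mem _ _ hX'mem)
      (Submodule.smul_mem _ _ (hstab _ hX'mem))
  have hωE0' := hstab _ hE0'
  have hEk' : ∀ k : Fin 4, (Pi.single (some k) 1 : Option (Fin 4) → ℂ)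
      ∈ Submodule.span ℚ SA := by
    intro k
    rw [hEkeq k]
    exact sub_mem (sub_mem (hMA (some k)) (Submodule.smul_mem _ _ hE0'))
      (Submodule.smul_mem _ _ hωE0')
  have hωEk' : ∀ k : Fin 4, ω • (Pi.single (some k) 1 : Option (Fin 4) → ℂ)
      ∈ Submodule.span ℚ SA := fun k => hstab _ (hEk' k)
  -- all generators have entries in ℚ(ω)
  have hsubA : ∀ (j0 j : Option (Fin 4)), ∃ p' q' : ℚ, A j j0 = (p' : ℂ) + (q' : ℂ) * ω := by
    intro j0 j
    match j, j0 with
    | none, none => exact ⟨1, 0, by simp [hA]⟩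
    | none, some k => exact ⟨p k, q k, by simp [hA, hbpq k]⟩
    | some i, none => exact ⟨p i, q i, by simp [hA, hbpq i]⟩
    | some i, some k =>
      by_cases h : i = k
      · exact ⟨1, 0, by simp [hA, h]⟩
      · exact ⟨0, 0, by simp [hA, h]⟩
  have hsubB : ∀ (j0 j : Option (Fin 4)), ∃ p' q' : ℚ, B j j0 = (p' : ℂ) + (q' : ℂ) * ω := by
    intro j0 j
    match j, j0 with
    | none, none => exact ⟨0, 1, by simp [hB]⟩
    | none, some k =>
      refine ⟨q k - p k, -(p k), ?_⟩
      simp only [hB]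
      rw [hconj, hbpq k]
      push_cast
      linear_combination (-(q k:ℂ)) * hω3
    | some i, none =>
      refine ⟨q i - p i, -(p i), ?_⟩
      simp only [hB]
      rw [hconj, hbpq i]
      push_cast
      linear_combination (-(q i:ℂ)) * hω3
    | some i, some k =>
      by_cases h : i = k
      · exact ⟨0, 1, by simp [hB, h]⟩
      · exact ⟨0, 0, by simp [hB, h]⟩
  have hsubCols : ∀ v ∈ cols, ∀ j, ∃ p' q' : ℚ, v j = (p' : ℂ) + (q' : ℂ) * ω := by
    intro v hv
    rw [hcols] at hv
    rcases hv with ⟨j0, rfl⟩ | ⟨j0, rfl⟩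
    · exact hsubA j0
    · exact hsubB j0
  have hsubSA : ∀ v ∈ SA, ∀ j, ∃ p' q' : ℚ, v j = (p' : ℂ) + (q' : ℂ) * ω := by
    intro v hv
    rcases hv with hv | ⟨y, hy, rfl⟩
    · rw [hcolsA] at hv
      obtain ⟨j0, rfl⟩ := hv
      exact hsubA j0
    · rw [hcolsA] at hy
      obtain ⟨j0, rfl⟩ := hy
      intro j
      obtain ⟨p', q', h⟩ := hsubA j0 j
      refine ⟨-q', p' - q', ?_⟩
      simp only [Pi.smul_apply, smul_eq_mul, h]
      push_cast
      linear_combination (q':ℂ) * hω3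
  -- conclusion
  have hsingles : ∀ j, (Pi.single j (1:ℂ) : Option (Fin 4) → ℂ) ∈ Submodule.span ℚ cols := by
    intro j; cases j with
    | none => exact hE0
    | some k => exact hEk k
  have hωsingles : ∀ j, ω • (Pi.single j (1:ℂ) : Option (Fin 4) → ℂ)
      ∈ Submodule.span ℚ cols := by
    intro j; cases j with
    | none => exact hωE0
    | some k => exact hωEk k
  have hsingles' : ∀ j, (Pi.single j (1:ℂ) : Option (Fin 4) → ℂ) ∈ Submodule.span ℚ SA := by
    intro j; cases j with
    | none => exact hE0'
    | some k => exact hEk' k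
  have hωsingles' : ∀ j, ω • (Pi.single j (1:ℂ) : Option (Fin 4) → ℂ)
      ∈ Submodule.span ℚ SA := by
    intro j; cases j with
    | none => exact hωE0'
    | some k => exact hωEk' k
  have hsetCols := aux_span_eq ω cols hsubCols hsingles hωsingles
  have hsetSA := aux_span_eq ω SA hsubSA hsingles' hωsingles'
  constructor
  · exact SetLike.coe_injective (hsetCols.trans hsetSA.symm)
  · refine ⟨LinearEquiv.refl ℂ _, ?_⟩
    rw [show ((LinearEquiv.refl ℂ (Option (Fin 4) → ℂ)
      : (Option (Fin 4) → ℂ) ≃ₗ[ℂ] (Option (Fin 4) → ℂ))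
      : (Option (Fin 4) → ℂ) → (Option (Fin 4) → ℂ)) = id from rfl, Set.image_id]
    exact hsetCols
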